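/- Let H be a complex inner product space and let u, v, w ∈ H be unit vectors. Then the pure-state trace distance d(x,y) = √(1 − |⟨x,y⟩|²) satisfies the triangle inequality: √(1 − |⟨u,w⟩|²) ≤ √(1 − |⟨u,v⟩|²) + √(1 − |⟨v,w⟩|²). -/

import Mathlib

private lemma scalar_key (a b c s t : ℝ) (ha : 0 ≤ a) (hb : 0 ≤ b) (hc : 0 ≤ c)
    (hs : 0 ≤ s) (ht : 0 ≤ t)
    (hs2 : s ^ 2 = 1 - a ^ 2) (ht2 : t ^ 2 = 1 - b ^ 2) (hc1 : c ≤ 1)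
    (hkey : a * b - s * t ≤ c) : Real.sqrt (1 - c ^ 2) ≤ s + t := by
  rcases le_or_gt 1 (s + t) with h | h
  · calc Real.sqrt (1 - c ^ 2) ≤ Real.sqrt 1 := Real.sqrt_le_sqrt (by nlinarith)
    _ = 1 := Real.sqrt_one
    _ ≤ s + t := h
  · have habst : s * t ≤ a * b := by nlinarith [mul_nonneg hs ht, mul_nonneg ha hb]
    have h1 : 1 - c ^ 2 ≤ (s + t) ^ 2 := by
      nlinarith [sq_nonneg (a * t + b * s), sq_nonneg (a * b - s * t),
        mul_nonneg hs ht, mul_nonneg ha hb, mul_nonneg (mul_nonneg ha hb) (mul_nonneg hs ht)]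
    calc Real.sqrt (1 - c ^ 2) ≤ Real.sqrt ((s + t) ^ 2) := Real.sqrt_le_sqrt h1
    _ = s + t := Real.sqrt_sq (by positivity)

private lemma perp_norm_sq {H : Type*} [NormedAddCommGroup H] [InnerProductSpace ℂ H]
    (u v : H) (hu : ‖u‖ = 1) (hv : ‖v‖ = 1) :
    ‖u - (inner ℂ v u : ℂ) • v‖ ^ 2 = 1 - ‖(inner ℂ u v : ℂ)‖ ^ 2 := by
  have h1 := norm_sub_sq (𝕜 := ℂ) u ((inner ℂ v u : ℂ) • v)
  rw [h1, inner_smul_right, ← inner_conj_symm v u, RCLike.conj_mul, norm_smul, hv, hu,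
    norm_inner_symm]
  simp [← Complex.ofReal_pow]
  ring

theorem pure_state_trace_distance_triangle
    {H : Type*} [NormedAddCommGroup H] [InnerProductSpace ℂ H]
    (u v w : H) (hu : ‖u‖ = 1) (hv : ‖v‖ = 1) (hw : ‖w‖ = 1) :
    Real.sqrt (1 - ‖(inner ℂ u w : ℂ)‖ ^ 2) ≤
      Real.sqrt (1 - ‖(inner ℂ u v : ℂ)‖ ^ 2) + Real.sqrt (1 - ‖(inner ℂ v w : ℂ)‖ ^ 2) := by
  set u' : H := u - (inner ℂ v u : ℂ) • v with hu'
  set w' : H := w - (inner ℂ v w : ℂ) • v with hw'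
  have hvv : (inner ℂ v v : ℂ) = 1 := by
    rw [inner_self_eq_norm_sq_to_K, hv]; norm_num
  -- decomposition of inner ℂ u w
  have hdecomp : (inner ℂ u w : ℂ) = inner ℂ u v * inner ℂ v w + inner ℂ u' w' := by
    simp only [hu', hw', inner_sub_left, inner_sub_right, inner_smul_left, inner_smul_right,
      hvv, mul_one]
    rw [← inner_conj_symm v u]
    ring_nf
  have hnu' : ‖u'‖ ^ 2 = 1 - ‖(inner ℂ u v : ℂ)‖ ^ 2 := perp_norm_sq u v hu hv
  have hnw' : ‖w'‖ ^ 2 = 1 - ‖(inner ℂ v w : ℂ)‖ ^ 2 := by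
    rw [perp_norm_sq w v hw hv, norm_inner_symm]
  have hc1 : ‖(inner ℂ u w : ℂ)‖ ≤ 1 := by
    have := norm_inner_le_norm (𝕜 := ℂ) u w
    rw [hu, hw] at this; simpa using this
  have hCS : ‖(inner ℂ u' w' : ℂ)‖ ≤ ‖u'‖ * ‖w'‖ := norm_inner_le_norm u' w'
  have hkey : ‖(inner ℂ u v : ℂ)‖ * ‖(inner ℂ v w : ℂ)‖ - ‖u'‖ * ‖w'‖ ≤ ‖(inner ℂ u w : ℂ)‖ := by
    have h2 : ‖(inner ℂ u v * inner ℂ v w : ℂ)‖ - ‖(inner ℂ u' w' : ℂ)‖ ≤ ‖(inner ℂ u w : ℂ)‖ := by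
      rw [hdecomp]
      have h3 := norm_sub_le ((inner ℂ u v * inner ℂ v w : ℂ) + inner ℂ u' w') (inner ℂ u' w')
      simpa using h3
    rw [norm_mul] at h2
    linarith
  rw [← hnu', ← hnw', Real.sqrt_sq (norm_nonneg _), Real.sqrt_sq (norm_nonneg _)]
  exact scalar_key _ _ _ _ _ (norm_nonneg _) (norm_nonneg _) (norm_nonneg _)
    (norm_nonneg _) (norm_nonneg _) hnu' hnw' hc1 hkey
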